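/- Positive identity expansion: for every positive proposition A⁺, if Γ, ⟨A⁺⟩ ; Ω ⊢ U is derivable in the focused sequent calculus for polarized intuitionistic logic, then Γ ; A⁺, Ω ⊢ U is derivable. The proof is by structural induction on A⁺ (mutually with negative identity expansion), using only the focal substitution principles and weakening. -/

import Mathlib

namespace StructuralFocalization

/- Polarized propositional intuitionistic logic -/
mutual
inductive PProp : Type
  | atom : Nat → PProp
  | down : NProp → PProp
  | bot  : PProp
  | or   : PProp → PProp → PProp
  | top  : PProp
  | and  : PProp → PProp → PProp
inductive NProp : Type
  | atom : Nat → NProp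
  | up   : PProp → NProp
  | imp  : PProp → NProp → NProp
  | top  : NProp
  | and  : NProp → NProp → NProp
end

/- Hypotheses: negative propositions or suspended positives ⟨A⁺⟩ -/
inductive Hyp : Type
  | neg  : NProp → Hyp
  | susp : PProp → Hyp

/- Succedents: A⁺, A⁻, or suspended ⟨A⁻⟩ -/
inductive Succ : Type
  | pos  : PProp → Succ
  | neg  : NProp → Succ
  | susp : NProp → Succ

abbrev Ctx := List Hyp

def Succ.stable : Succ → Prop
  | .pos _ => True
  | .susp _ => True
  | .neg _ => False

def Hyp.suspNormal : Hyp → Prop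
  | .susp (PProp.atom _) => True
  | .susp _ => False
  | .neg _ => True

def Ctx.suspNormal (Γ : Ctx) : Prop := ∀ h ∈ Γ, h.suspNormal

def Succ.suspNormal : Succ → Prop
  | .susp (NProp.atom _) => True
  | .susp _ => False
  | _ => True

/- The focused sequent calculus (Figures 3 and 4 of "Structural focalization",
   with the generalized id⁺/id⁻ rules for arbitrary suspended propositions). -/
mutual
/-- Right focus: Γ ⊢ [A⁺] -/
inductive RFoc : Ctx → PProp → Prop
  | idP {Γ A} : Hyp.susp A ∈ Γ → RFoc Γ A
  | downR {Γ A} : Inv Γ [] (Succ.neg A) → RFoc Γ (PProp.down A)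
  | orR1 {Γ A B} : RFoc Γ A → RFoc Γ (PProp.or A B)
  | orR2 {Γ A B} : RFoc Γ B → RFoc Γ (PProp.or A B)
  | topR {Γ} : RFoc Γ PProp.top
  | andR {Γ A B} : RFoc Γ A → RFoc Γ B → RFoc Γ (PProp.and A B)
/-- Inversion: Γ ; Ω ⊢ U -/
inductive Inv : Ctx → List PProp → Succ → Prop
  | focR {Γ A} : RFoc Γ A → Inv Γ [] (Succ.pos A)
  | focL {Γ A U} : Hyp.neg A ∈ Γ → Succ.stable U → LFoc Γ A U → Inv Γ [] U
  | etaP {Γ p Ω U} : Inv (Hyp.susp (PProp.atom p) :: Γ) Ω U → Inv Γ (PProp.atom p :: Ω) U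
  | downL {Γ A Ω U} : Inv (Hyp.neg A :: Γ) Ω U → Inv Γ (PProp.down A :: Ω) U
  | botL {Γ Ω U} : Inv Γ (PProp.bot :: Ω) U
  | orL {Γ A B Ω U} : Inv Γ (A :: Ω) U → Inv Γ (B :: Ω) U → Inv Γ (PProp.or A B :: Ω) U
  | topPL {Γ Ω U} : Inv Γ Ω U → Inv Γ (PProp.top :: Ω) U
  | andPL {Γ A B Ω U} : Inv Γ (A :: B :: Ω) U → Inv Γ (PProp.and A B :: Ω) U
  | etaN {Γ p} : Inv Γ [] (Succ.susp (NProp.atom p)) → Inv Γ [] (Succ.neg (NProp.atom p))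
  | upR {Γ A} : Inv Γ [] (Succ.pos A) → Inv Γ [] (Succ.neg (NProp.up A))
  | impR {Γ A B} : Inv Γ [A] (Succ.neg B) → Inv Γ [] (Succ.neg (NProp.imp A B))
  | topNR {Γ} : Inv Γ [] (Succ.neg NProp.top)
  | andNR {Γ A B} : Inv Γ [] (Succ.neg A) → Inv Γ [] (Succ.neg B) →
      Inv Γ [] (Succ.neg (NProp.and A B))
/-- Left focus: Γ ; [A⁻] ⊢ U -/
inductive LFoc : Ctx → NProp → Succ → Prop
  | idN {Γ A} : LFoc Γ A (Succ.susp A)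
  | upL {Γ A U} : Inv Γ [A] U → LFoc Γ (NProp.up A) U
  | impL {Γ A B U} : RFoc Γ A → LFoc Γ B U → LFoc Γ (NProp.imp A B) U
  | andL1 {Γ A B U} : LFoc Γ A U → LFoc Γ (NProp.and A B) U
  | andL2 {Γ A B U} : LFoc Γ B U → LFoc Γ (NProp.and A B) U
end

/- Unpolarized propositions and Kleene's G3 -/
inductive UProp : Type
  | atom : Nat → UProp
  | bot  : UProp
  | or   : UProp → UProp → UProp
  | top  : UProp
  | and  : UProp → UProp → UProp
  | imp  : UProp → UProp → UProp

inductive G3 : List UProp → UProp → Prop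
  | init {Γ p} : UProp.atom p ∈ Γ → G3 Γ (UProp.atom p)
  | botL {Γ Q} : UProp.bot ∈ Γ → G3 Γ Q
  | orR1 {Γ A B} : G3 Γ A → G3 Γ (UProp.or A B)
  | orR2 {Γ A B} : G3 Γ B → G3 Γ (UProp.or A B)
  | orL {Γ A B Q} : UProp.or A B ∈ Γ → G3 (A :: Γ) Q → G3 (B :: Γ) Q → G3 Γ Q
  | topR {Γ} : G3 Γ UProp.top
  | andR {Γ A B} : G3 Γ A → G3 Γ B → G3 Γ (UProp.and A B)
  | andL1 {Γ A B Q} : UProp.and A B ∈ Γ → G3 (A :: Γ) Q → G3 Γ Q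
  | andL2 {Γ A B Q} : UProp.and A B ∈ Γ → G3 (B :: Γ) Q → G3 Γ Q
  | impR {Γ A B} : G3 (A :: Γ) B → G3 Γ (UProp.imp A B)
  | impL {Γ A B Q} : UProp.imp A B ∈ Γ → G3 Γ A → G3 (B :: Γ) Q → G3 Γ Q

/-- G3 with an ordered auxiliary context Ψ: Γ; Ψ ⊢ Q -/
inductive G3Psi : List UProp → List UProp → UProp → Prop
  | cons {Γ P Ψ Q} : G3Psi (P :: Γ) Ψ Q → G3Psi Γ (P :: Ψ) Q
  | nil {Γ Q} : G3 Γ Q → G3Psi Γ [] Q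

/- Erasure -/
mutual
def eraseP : PProp → UProp
  | .atom p => .atom p
  | .down A => eraseN A
  | .bot => .bot
  | .or A B => .or (eraseP A) (eraseP B)
  | .top => .top
  | .and A B => .and (eraseP A) (eraseP B)
def eraseN : NProp → UProp
  | .atom p => .atom p
  | .up A => eraseP A
  | .imp A B => .imp (eraseP A) (eraseN B)
  | .top => .top
  | .and A B => .and (eraseN A) (eraseN B)
end

def eraseHyp : Hyp → UProp
  | .neg A => eraseN A
  | .susp A => eraseP A

def eraseCtx (Γ : Ctx) : List UProp := Γ.map eraseHyp

def eraseSucc : Succ → UProp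
  | .pos A => eraseP A
  | .neg A => eraseN A
  | .susp A => eraseN A

set_option linter.unreachableTactic false
set_option linter.unusedTactic false

def Sub (Γ Γ' : Ctx) : Prop := ∀ h, h ∈ Γ → h ∈ Γ'

theorem Sub.cons {Γ Γ' : Ctx} (s : Sub Γ Γ') (x : Hyp) : Sub (x :: Γ) (x :: Γ') := by
  intro h hm
  rcases List.mem_cons.1 hm with h1 | h2
  · exact h1 ▸ List.mem_cons_self
  · exact List.mem_cons_of_mem _ (s _ h2)

theorem Sub.tail {Γ : Ctx} (x : Hyp) : Sub Γ (x :: Γ) :=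
  fun _ hm => List.mem_cons_of_mem _ hm

theorem Sub.refl (Γ : Ctx) : Sub Γ Γ := fun _ h => h

theorem RFoc.wk {Γ A} (d : RFoc Γ A) : ∀ Γ', Sub Γ Γ' → RFoc Γ' A := by
  induction d using RFoc.rec
    (motive_2 := fun Γ Ω U _ => ∀ Γ', Sub Γ Γ' → Inv Γ' Ω U)
    (motive_3 := fun Γ A U _ => ∀ Γ', Sub Γ Γ' → LFoc Γ' A U) with
  | idP m =>
      (first | intro Γp s | rename_i Γp s); exact .idP (s _ m)
      | downR d ih =>
      (first | intro Γp s | rename_i Γp s); exact .downR (ih _ s)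
      | orR1 d ih =>
      (first | intro Γp s | rename_i Γp s); exact .orR1 (ih _ s)
      | orR2 d ih =>
      (first | intro Γp s | rename_i Γp s); exact .orR2 (ih _ s)
      | topR => (first | intro Γp s | rename_i Γp s); exact .topR
  | andR d e ih1 ih2 =>
      (first | intro Γp s | rename_i Γp s); exact .andR (ih1 _ s) (ih2 _ s)
      | focR d ih =>
      (first | intro Γp s | rename_i Γp s); exact .focR (ih _ s)
      | focL m st d ih =>
      (first | intro Γp s | rename_i Γp s); exact .focL (s _ m) st (ih _ s)
      | etaP d ih =>
      (first | intro Γp s | rename_i Γp s); exact .etaP (ih _ (Sub.cons s _))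
      | downL d ih =>
      (first | intro Γp s | rename_i Γp s); exact .downL (ih _ (Sub.cons s _))
      | botL => (first | intro Γp s | rename_i Γp s); exact .botL
  | orL d e ih1 ih2 =>
      (first | intro Γp s | rename_i Γp s); exact .orL (ih1 _ s) (ih2 _ s)
      | topPL d ih =>
      (first | intro Γp s | rename_i Γp s); exact .topPL (ih _ s)
      | andPL d ih =>
      (first | intro Γp s | rename_i Γp s); exact .andPL (ih _ s)
      | etaN d ih =>
      (first | intro Γp s | rename_i Γp s); exact .etaN (ih _ s)
      | upR d ih =>
      (first | intro Γp s | rename_i Γp s); exact .upR (ih _ s)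
      | impR d ih =>
      (first | intro Γp s | rename_i Γp s); exact .impR (ih _ s)
      | topNR => (first | intro Γp s | rename_i Γp s); exact .topNR
  | andNR d e ih1 ih2 =>
      (first | intro Γp s | rename_i Γp s); exact .andNR (ih1 _ s) (ih2 _ s)
      | idN => (first | intro Γp s | rename_i Γp s); exact .idN
  | upL d ih =>
      (first | intro Γp s | rename_i Γp s); exact .upL (ih _ s)
      | impL d e ih1 ih2 =>
      (first | intro Γp s | rename_i Γp s); exact .impL (ih1 _ s) (ih2 _ s)
      | andL1 d ih =>
      (first | intro Γp s | rename_i Γp s); exact .andL1 (ih _ s)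
      | andL2 d ih =>
      (first | intro Γp s | rename_i Γp s); exact .andL2 (ih _ s)
theorem Inv.wk {Γ Ω U} (d : Inv Γ Ω U) : ∀ Γ', Sub Γ Γ' → Inv Γ' Ω U := by
  induction d using Inv.rec
    (motive_1 := fun Γ A _ => ∀ Γ', Sub Γ Γ' → RFoc Γ' A)
    (motive_3 := fun Γ A U _ => ∀ Γ', Sub Γ Γ' → LFoc Γ' A U) with
  | idP m =>
      (first | intro Γp s | rename_i Γp s); exact .idP (s _ m)
      | downR d ih =>
      (first | intro Γp s | rename_i Γp s); exact .downR (ih _ s)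
      | orR1 d ih =>
      (first | intro Γp s | rename_i Γp s); exact .orR1 (ih _ s)
      | orR2 d ih =>
      (first | intro Γp s | rename_i Γp s); exact .orR2 (ih _ s)
      | topR => (first | intro Γp s | rename_i Γp s); exact .topR
  | andR d e ih1 ih2 =>
      (first | intro Γp s | rename_i Γp s); exact .andR (ih1 _ s) (ih2 _ s)
      | focR d ih =>
      (first | intro Γp s | rename_i Γp s); exact .focR (ih _ s)
      | focL m st d ih =>
      (first | intro Γp s | rename_i Γp s); exact .focL (s _ m) st (ih _ s)
      | etaP d ih =>
      (first | intro Γp s | rename_i Γp s); exact .etaP (ih _ (Sub.cons s _))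
      | downL d ih =>
      (first | intro Γp s | rename_i Γp s); exact .downL (ih _ (Sub.cons s _))
      | botL => (first | intro Γp s | rename_i Γp s); exact .botL
  | orL d e ih1 ih2 =>
      (first | intro Γp s | rename_i Γp s); exact .orL (ih1 _ s) (ih2 _ s)
      | topPL d ih =>
      (first | intro Γp s | rename_i Γp s); exact .topPL (ih _ s)
      | andPL d ih =>
      (first | intro Γp s | rename_i Γp s); exact .andPL (ih _ s)
      | etaN d ih =>
      (first | intro Γp s | rename_i Γp s); exact .etaN (ih _ s)
      | upR d ih =>
      (first | intro Γp s | rename_i Γp s); exact .upR (ih _ s)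
      | impR d ih =>
      (first | intro Γp s | rename_i Γp s); exact .impR (ih _ s)
      | topNR => (first | intro Γp s | rename_i Γp s); exact .topNR
  | andNR d e ih1 ih2 =>
      (first | intro Γp s | rename_i Γp s); exact .andNR (ih1 _ s) (ih2 _ s)
      | idN => (first | intro Γp s | rename_i Γp s); exact .idN
  | upL d ih =>
      (first | intro Γp s | rename_i Γp s); exact .upL (ih _ s)
      | impL d e ih1 ih2 =>
      (first | intro Γp s | rename_i Γp s); exact .impL (ih1 _ s) (ih2 _ s)
      | andL1 d ih =>
      (first | intro Γp s | rename_i Γp s); exact .andL1 (ih _ s)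
      | andL2 d ih =>
      (first | intro Γp s | rename_i Γp s); exact .andL2 (ih _ s)
theorem LFoc.wk {Γ A U} (d : LFoc Γ A U) : ∀ Γ', Sub Γ Γ' → LFoc Γ' A U := by
  induction d using LFoc.rec
    (motive_1 := fun Γ A _ => ∀ Γ', Sub Γ Γ' → RFoc Γ' A)
    (motive_2 := fun Γ Ω U _ => ∀ Γ', Sub Γ Γ' → Inv Γ' Ω U) with
  | idP m =>
      (first | intro Γp s | rename_i Γp s); exact .idP (s _ m)
      | downR d ih =>
      (first | intro Γp s | rename_i Γp s); exact .downR (ih _ s)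
      | orR1 d ih =>
      (first | intro Γp s | rename_i Γp s); exact .orR1 (ih _ s)
      | orR2 d ih =>
      (first | intro Γp s | rename_i Γp s); exact .orR2 (ih _ s)
      | topR => (first | intro Γp s | rename_i Γp s); exact .topR
  | andR d e ih1 ih2 =>
      (first | intro Γp s | rename_i Γp s); exact .andR (ih1 _ s) (ih2 _ s)
      | focR d ih =>
      (first | intro Γp s | rename_i Γp s); exact .focR (ih _ s)
      | focL m st d ih =>
      (first | intro Γp s | rename_i Γp s); exact .focL (s _ m) st (ih _ s)
      | etaP d ih =>
      (first | intro Γp s | rename_i Γp s); exact .etaP (ih _ (Sub.cons s _))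
      | downL d ih =>
      (first | intro Γp s | rename_i Γp s); exact .downL (ih _ (Sub.cons s _))
      | botL => (first | intro Γp s | rename_i Γp s); exact .botL
  | orL d e ih1 ih2 =>
      (first | intro Γp s | rename_i Γp s); exact .orL (ih1 _ s) (ih2 _ s)
      | topPL d ih =>
      (first | intro Γp s | rename_i Γp s); exact .topPL (ih _ s)
      | andPL d ih =>
      (first | intro Γp s | rename_i Γp s); exact .andPL (ih _ s)
      | etaN d ih =>
      (first | intro Γp s | rename_i Γp s); exact .etaN (ih _ s)
      | upR d ih =>
      (first | intro Γp s | rename_i Γp s); exact .upR (ih _ s)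
      | impR d ih =>
      (first | intro Γp s | rename_i Γp s); exact .impR (ih _ s)
      | topNR => (first | intro Γp s | rename_i Γp s); exact .topNR
  | andNR d e ih1 ih2 =>
      (first | intro Γp s | rename_i Γp s); exact .andNR (ih1 _ s) (ih2 _ s)
      | idN => (first | intro Γp s | rename_i Γp s); exact .idN
  | upL d ih =>
      (first | intro Γp s | rename_i Γp s); exact .upL (ih _ s)
      | impL d e ih1 ih2 =>
      (first | intro Γp s | rename_i Γp s); exact .impL (ih1 _ s) (ih2 _ s)
      | andL1 d ih =>
      (first | intro Γp s | rename_i Γp s); exact .andL1 (ih _ s)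
      | andL2 d ih =>
      (first | intro Γp s | rename_i Γp s); exact .andL2 (ih _ s)
      def SubP (A : PProp) (Γ Γ' : Ctx) : Prop := ∀ h, h ∈ Γ → h = Hyp.susp A ∨ h ∈ Γ'

theorem SubP.cons {A} {Γ Γ' : Ctx} (s : SubP A Γ Γ') (x : Hyp) :
    SubP A (x :: Γ) (x :: Γ') := by
  intro h hm
  rcases List.mem_cons.1 hm with h1 | h2
  · exact Or.inr (h1 ▸ List.mem_cons_self)
  · rcases s _ h2 with h3 | h3
    · exact Or.inl h3
    · exact Or.inr (List.mem_cons_of_mem _ h3)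

theorem SubP.base {A} {Γ Γ' : Ctx} (s : Sub Γ Γ') : SubP A (Hyp.susp A :: Γ) Γ' := by
  intro h hm
  rcases List.mem_cons.1 hm with h1 | h2
  · exact Or.inl h1
  · exact Or.inr (s _ h2)

theorem Inv.substP {Γ Ω U} (d : Inv Γ Ω U) :
    ∀ (A : PProp) (Γ' : Ctx), RFoc Γ' A → SubP A Γ Γ' → Inv Γ' Ω U := by
  induction d using Inv.rec
    (motive_1 := fun Γ B _ => ∀ A Γ', RFoc Γ' A → SubP A Γ Γ' → RFoc Γ' B)
    (motive_3 := fun Γ B U _ => ∀ A Γ', RFoc Γ' A → SubP A Γ Γ' → LFoc Γ' B U) with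
  | idP m =>
      (first | intro A Γp r s | rename_i A Γp r s)
      exact (s _ m).elim (fun h => by cases h; exact r) (fun h => .idP h)
  | downR d ih =>
      (first | intro A Γp r s | rename_i A Γp r s)
      exact .downR (ih _ _ r s)
  | orR1 d ih =>
      (first | intro A Γp r s | rename_i A Γp r s)
      exact .orR1 (ih _ _ r s)
  | orR2 d ih =>
      (first | intro A Γp r s | rename_i A Γp r s)
      exact .orR2 (ih _ _ r s)
  | topR =>
      (first | intro A Γp r s | rename_i A Γp r s)
      exact .topR
  | andR d e ih1 ih2 =>
      (first | intro A Γp r s | rename_i A Γp r s)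
      exact .andR (ih1 _ _ r s) (ih2 _ _ r s)
  | focR d ih =>
      (first | intro A Γp r s | rename_i A Γp r s)
      exact .focR (ih _ _ r s)
  | focL m st d ih =>
      (first | intro A Γp r s | rename_i A Γp r s)
      exact (s _ m).elim (fun h => Hyp.noConfusion h)
                (fun h => .focL h st (ih _ _ r s))
  | etaP d ih =>
      (first | intro A Γp r s | rename_i A Γp r s)
      exact .etaP (ih _ _ (r.wk _ (Sub.tail _)) (SubP.cons s _))
  | downL d ih =>
      (first | intro A Γp r s | rename_i A Γp r s)
      exact .downL (ih _ _ (r.wk _ (Sub.tail _)) (SubP.cons s _))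
  | botL =>
      (first | intro A Γp r s | rename_i A Γp r s)
      exact .botL
  | orL d e ih1 ih2 =>
      (first | intro A Γp r s | rename_i A Γp r s)
      exact .orL (ih1 _ _ r s) (ih2 _ _ r s)
  | topPL d ih =>
      (first | intro A Γp r s | rename_i A Γp r s)
      exact .topPL (ih _ _ r s)
  | andPL d ih =>
      (first | intro A Γp r s | rename_i A Γp r s)
      exact .andPL (ih _ _ r s)
  | etaN d ih =>
      (first | intro A Γp r s | rename_i A Γp r s)
      exact .etaN (ih _ _ r s)
  | upR d ih =>
      (first | intro A Γp r s | rename_i A Γp r s)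
      exact .upR (ih _ _ r s)
  | impR d ih =>
      (first | intro A Γp r s | rename_i A Γp r s)
      exact .impR (ih _ _ r s)
  | topNR =>
      (first | intro A Γp r s | rename_i A Γp r s)
      exact .topNR
  | andNR d e ih1 ih2 =>
      (first | intro A Γp r s | rename_i A Γp r s)
      exact .andNR (ih1 _ _ r s) (ih2 _ _ r s)
  | idN =>
      (first | intro A Γp r s | rename_i A Γp r s)
      exact .idN
  | upL d ih =>
      (first | intro A Γp r s | rename_i A Γp r s)
      exact .upL (ih _ _ r s)
  | impL d e ih1 ih2 =>
      (first | intro A Γp r s | rename_i A Γp r s)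
      exact .impL (ih1 _ _ r s) (ih2 _ _ r s)
  | andL1 d ih =>
      (first | intro A Γp r s | rename_i A Γp r s)
      exact .andL1 (ih _ _ r s)
  | andL2 d ih =>
      (first | intro A Γp r s | rename_i A Γp r s)
      exact .andL2 (ih _ _ r s)


theorem Inv.substN {Γ Ω S} (d : Inv Γ Ω S) :
    ∀ (A : NProp) (Γ' : Ctx) (U : Succ), S = Succ.susp A → Sub Γ Γ' →
      LFoc Γ' A U → Succ.stable U → Inv Γ' Ω U := by
  induction d using Inv.rec
    (motive_1 := fun _ _ _ => True)
    (motive_3 := fun Γ B S _ => ∀ (A : NProp) (Γ' : Ctx) (U : Succ),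
      S = Succ.susp A → Sub Γ Γ' → LFoc Γ' A U → Succ.stable U → LFoc Γ' B U) with
  | focR d ih =>
      (first | intro A Γp V h s l st | rename_i A Γp V h s l st)
      cases h
  | focL m st0 d ih =>
      (first | intro A Γp V h s l st | rename_i A Γp V h s l st)
      exact .focL (s _ m) st (ih _ _ _ h s l st)
  | etaP d ih =>
      (first | intro A Γp V h s l st | rename_i A Γp V h s l st)
      exact .etaP (ih _ _ _ h (Sub.cons s _) (l.wk _ (Sub.tail _)) st)
  | downL d ih =>
      (first | intro A Γp V h s l st | rename_i A Γp V h s l st)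
      exact .downL (ih _ _ _ h (Sub.cons s _) (l.wk _ (Sub.tail _)) st)
  | botL =>
      (first | intro A Γp V h s l st | rename_i A Γp V h s l st)
      exact .botL
  | orL d e ih1 ih2 =>
      (first | intro A Γp V h s l st | rename_i A Γp V h s l st)
      exact .orL (ih1 _ _ _ h s l st) (ih2 _ _ _ h s l st)
  | topPL d ih =>
      (first | intro A Γp V h s l st | rename_i A Γp V h s l st)
      exact .topPL (ih _ _ _ h s l st)
  | andPL d ih =>
      (first | intro A Γp V h s l st | rename_i A Γp V h s l st)
      exact .andPL (ih _ _ _ h s l st)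
  | etaN d ih =>
      (first | intro A Γp V h s l st | rename_i A Γp V h s l st)
      cases h
  | upR d ih =>
      (first | intro A Γp V h s l st | rename_i A Γp V h s l st)
      cases h
  | impR d ih =>
      (first | intro A Γp V h s l st | rename_i A Γp V h s l st)
      cases h
  | topNR =>
      (first | intro A Γp V h s l st | rename_i A Γp V h s l st)
      cases h
  | andNR d e ih1 ih2 =>
      (first | intro A Γp V h s l st | rename_i A Γp V h s l st)
      cases h
  | idN =>
      (first | intro A Γp V h s l st | rename_i A Γp V h s l st)
      cases h; exact l
  | upL d ih =>
      (first | intro A Γp V h s l st | rename_i A Γp V h s l st)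
      exact .upL (ih _ _ _ h s l st)
  | impL d e ih1 ih2 =>
      (first | intro A Γp V h s l st | rename_i A Γp V h s l st)
      exact .impL (d.wk _ s) (ih2 _ _ _ h s l st)
  | andL1 d ih =>
      (first | intro A Γp V h s l st | rename_i A Γp V h s l st)
      exact .andL1 (ih _ _ _ h s l st)
  | andL2 d ih =>
      (first | intro A Γp V h s l st | rename_i A Γp V h s l st)
      exact .andL2 (ih _ _ _ h s l st)
  | idP m => trivial
  | downR d ih => trivial
  | orR1 d ih => trivial
  | orR2 d ih => trivial
  | topR => trivial
  | andR d e ih1 ih2 => trivial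


mutual
theorem posExp : ∀ (A : PProp) (Γ : Ctx) (Ω : List PProp) (U : Succ),
    Inv (Hyp.susp A :: Γ) Ω U → Inv Γ (A :: Ω) U
  | .atom _, _, _, _, d => .etaP d
  | .down B, Γ, Ω, U, d =>
      have r : RFoc (Hyp.neg B :: Γ) (PProp.down B) :=
        .downR (negExp B _ (.focL (List.mem_cons_self) trivial .idN))
      .downL (d.substP _ _ r (SubP.base (Sub.tail _)))
  | .bot, _, _, _, _ => .botL
  | .or A B, Γ, Ω, U, d =>
      .orL
        (posExp A Γ Ω U (d.substP _ _ (.orR1 (.idP (List.mem_cons_self)))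
          (SubP.base (Sub.tail _))))
        (posExp B Γ Ω U (d.substP _ _ (.orR2 (.idP (List.mem_cons_self)))
          (SubP.base (Sub.tail _))))
  | .top, Γ, Ω, U, d => .topPL (d.substP _ _ .topR (SubP.base (Sub.refl _)))
  | .and A B, Γ, Ω, U, d =>
      .andPL (posExp A Γ (B :: Ω) U (posExp B (Hyp.susp A :: Γ) Ω U
        (d.substP _ _
          (.andR (.idP (List.mem_cons_of_mem _ (List.mem_cons_self)))
                 (.idP (List.mem_cons_self)))
          (SubP.base (fun _ hm =>
            List.mem_cons_of_mem _ (List.mem_cons_of_mem _ hm))))))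
theorem negExp : ∀ (A : NProp) (Γ : Ctx),
    Inv Γ [] (Succ.susp A) → Inv Γ [] (Succ.neg A)
  | .atom _, _, d => .etaN d
  | .up A, Γ, d =>
      .upR (d.substN _ _ _ rfl (Sub.refl _)
        (.upL (posExp A Γ [] _ (.focR (.idP (List.mem_cons_self))))) trivial)
  | .imp A B, Γ, d =>
      .impR (posExp A Γ [] _ (negExp B _
        (d.substN _ _ _ rfl (Sub.tail _)
          (.impL (.idP (List.mem_cons_self)) .idN) trivial)))
  | .top, _, _ => .topNR
  | .and A B, Γ, d =>
      .andNR
        (negExp A Γ (d.substN _ _ _ rfl (Sub.refl _) (.andL1 .idN) trivial))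
        (negExp B Γ (d.substN _ _ _ rfl (Sub.refl _) (.andL2 .idN) trivial))
end

/-- Positive identity expansion. -/
theorem positive_identity_expansion :
    ∀ (A : PProp) (Γ : Ctx) (Ω : List PProp) (U : Succ),
      Inv (Hyp.susp A :: Γ) Ω U → Inv Γ (A :: Ω) U := posExp

end StructuralFocalization
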